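/- Let R be a ring, G a finite group acting on R with |G|⁻¹ ∈ k ⊆ R central, and S = R # kG the smash (skew group) product. If I is a nilpotent G-stable ideal of R, then I·(R#kG) = (R#kG)·I is a nilpotent two-sided ideal of R#kG. Consequently, if R#kG is semiprime, then R has no nonzero nilpotent G-stable ideals. -/

import Mathlib

/-- A (left) ideal is nilpotent if all products of some fixed length of its elements
vanish. -/
def IdealIsNilpotent {R : Type*} [Ring R] (I : Ideal R) : Prop :=
  ∃ n : ℕ, 0 < n ∧ ∀ l : List R, l.length = n → (∀ x ∈ l, x ∈ I) → l.prod = 0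

/-- A ring is semiprime if `a S a = 0` implies `a = 0`. -/
def IsSemiprimeRing' (S : Type*) [Ring S] : Prop :=
  ∀ a : S, (∀ s : S, a * s * a = 0) → a = 0

/-- Let `S = R # kG` be the skew group algebra of a finite group `G` acting on `R`
(`S` is free as a left `R`-module on the grouplike units `u_g`, which conjugate `R` by
the action).  If `I` is a nilpotent `G`-stable two-sided ideal of `R`, then
`I·S = S·I` is a nilpotent two-sided ideal of `S`; consequently, if `S` is semiprime
then `I = 0`. -/
theorem smash_with_group_algebra_nilpotent_ideal
    {k : Type*} [Field k] [CharZero k]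
    {R S : Type*} [Ring R] [Ring S] [Algebra k R] [Algebra k S]
    {G : Type*} [Group G] [Fintype G]
    (ρ : G →* (R ≃ₐ[k] R)) (ι : R →ₐ[k] S) (u : G →* Sˣ)
    (hconj : ∀ (g : G) (r : R), (u g : S) * ι r = ι (ρ g r) * (u g : S))
    [Module R S] [IsScalarTower R S S]
    (hsmul : ∀ (r : R) (s : S), r • s = ι r * s)
    (B : Module.Basis G R S) (hB : ∀ g : G, B g = (u g : S))
    (I : Ideal R)
    (hI2 : ∀ x ∈ I, ∀ r : R, x * r ∈ I)
    (hIG : ∀ (g : G), ∀ x ∈ I, ρ g x ∈ I)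
    (hInil : IdealIsNilpotent I) :
    (∀ x ∈ Ideal.span (⇑ι '' (I : Set R)), ∀ s : S,
        x * s ∈ Ideal.span (⇑ι '' (I : Set R))) ∧
      IdealIsNilpotent (Ideal.span (⇑ι '' (I : Set R))) ∧
      (IsSemiprimeRing' S → I = ⊥) := by
  classical
  -- basic facts
  have hB1 : B (1 : G) = 1 := by rw [hB, map_one, Units.val_one]
  have hρinv : ∀ (g : G) (a : R), ρ g (ρ g⁻¹ a) = a := by
    intro g a
    rw [← AlgEquiv.mul_apply, ← map_mul, mul_inv_cancel, map_one, AlgEquiv.one_apply]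
  have hrepr_ι : ∀ (r : R) (g : G), B.repr (ι r) g = if (1 : G) = g then r else 0 := by
    intro r g
    have : ι r = r • B 1 := by rw [hB1, hsmul, mul_one]
    rw [this, map_smul, Finsupp.smul_apply, B.repr_self, Finsupp.single_apply, smul_eq_mul]
    split <;> simp
  have hι_inj : ∀ r : R, ι r = 0 → r = 0 := by
    intro r hr
    have h1 := hrepr_ι r 1
    rw [hr, map_zero, if_pos rfl] at h1
    exact h1.symm
  -- product of basis-scalar terms
  have hterm : ∀ (a b : R) (h g' : G),
      (a • B h) * (b • B g') = (a * ρ h b) • B (h * g') := by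
    intro a b h g'
    rw [hsmul, hsmul, hsmul, hB, hB, hB, map_mul u h g', Units.val_mul, map_mul,
      mul_assoc (ι a), ← mul_assoc ((u h : S)), hconj]
    simp only [mul_assoc]
  -- the key multiplication formula for coordinates
  have key : ∀ (x t : S) (g : G),
      B.repr (x * t) g = ∑ h : G, B.repr x h * ρ h (B.repr t (h⁻¹ * g)) := by
    intro x t g
    have e1 : x * t = ∑ h : G, ∑ g' : G,
        (B.repr x h * ρ h (B.repr t g')) • B (h * g') := by
      conv_lhs => rw [← B.sum_repr x, ← B.sum_repr t]
      rw [Finset.sum_mul]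
      refine Finset.sum_congr rfl fun h _ => ?_
      rw [Finset.mul_sum]
      exact Finset.sum_congr rfl fun g' _ => hterm _ _ _ _
    rw [e1, map_sum, Finsupp.coe_finset_sum, Finset.sum_apply]
    refine Finset.sum_congr rfl fun h _ => ?_
    rw [map_sum, Finsupp.coe_finset_sum, Finset.sum_apply]
    have h2 : ∀ g' : G, (B.repr ((B.repr x h * ρ h (B.repr t g')) • B (h * g'))) g
        = if g' = h⁻¹ * g then B.repr x h * ρ h (B.repr t g') else 0 := by
      intro g'
      rw [map_smul, Finsupp.smul_apply, B.repr_self, Finsupp.single_apply, smul_eq_mul]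
      by_cases hc : g' = h⁻¹ * g
      · subst hc; rw [if_pos rfl, if_pos (by group), mul_one]
      · rw [if_neg hc, if_neg (fun hcon => hc (by rw [eq_inv_mul_iff_mul_eq]; exact hcon)),
          mul_zero]
    simp_rw [h2]
    rw [Finset.sum_ite_eq' Finset.univ (h⁻¹ * g), if_pos (Finset.mem_univ _)]
  -- K membership predicate: all coordinates in I
  -- right stability of K
  have hKmul : ∀ (x s : S), (∀ g, B.repr x g ∈ I) → ∀ g, B.repr (x * s) g ∈ I := by
    intro x s hx g
    rw [key]
    exact Submodule.sum_mem _ fun h _ => hI2 _ (hx h) _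
  -- left stability of K
  have hKmul' : ∀ (s x : S), (∀ g, B.repr x g ∈ I) → ∀ g, B.repr (s * x) g ∈ I := by
    intro s x hx g
    rw [key]
    exact Submodule.sum_mem _ fun h _ => Ideal.mul_mem_left _ _ (hIG h _ (hx _))
  -- span (ι '' I) ⊆ K
  have hJK : ∀ x ∈ Ideal.span (⇑ι '' (I : Set R)), ∀ g, B.repr x g ∈ I := by
    intro x hx
    induction hx using Submodule.span_induction with
    | mem x hxm =>
      obtain ⟨a, ha, rfl⟩ := hxm
      intro g
      rw [hrepr_ι]
      split
      · exact ha
      · exact I.zero_mem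
    | zero => intro g; simp
    | add x y _ _ hx hy =>
      intro g
      rw [map_add, Finsupp.add_apply]
      exact I.add_mem (hx g) (hy g)
    | smul s x _ hx =>
      intro g
      rw [smul_eq_mul]
      exact hKmul' s x hx g
  -- K ⊆ span (ι '' I)
  have hKJ : ∀ x : S, (∀ g, B.repr x g ∈ I) → x ∈ Ideal.span (⇑ι '' (I : Set R)) := by
    intro x hx
    rw [← B.sum_repr x]
    refine Submodule.sum_mem _ fun g _ => ?_
    have h3 : B.repr x g • B g = (u g : S) * ι (ρ g⁻¹ (B.repr x g)) := by
      rw [hconj, hρinv, hsmul, hB]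
    rw [h3]
    exact Ideal.mul_mem_left _ _
      (Ideal.subset_span ⟨_, hIG g⁻¹ _ (hx g), rfl⟩)
  -- nilpotency machinery
  obtain ⟨n, hn0, hn⟩ := hInil
  set P : ℕ → AddSubgroup R := fun m => AddSubgroup.closure
    {x | ∃ l : List R, l.length = m ∧ (∀ a ∈ l, a ∈ I) ∧ l.prod = x} with hPdef
  have hPmul : ∀ a, a ∈ I → ∀ m y, y ∈ P m → a * y ∈ P (m + 1) := by
    intro a ha m y hy
    induction hy using AddSubgroup.closure_induction with
    | mem z hz =>
      obtain ⟨l, hl, hmem, rfl⟩ := hz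
      refine AddSubgroup.subset_closure ⟨a :: l, by simp [hl], ?_, List.prod_cons.symm⟩
      intro b hb
      rcases List.mem_cons.mp hb with rfl | hb
      · exact ha
      · exact hmem b hb
    | zero => rw [mul_zero]; exact (P (m+1)).zero_mem
    | add y z _ _ hy hz => rw [mul_add]; exact (P (m+1)).add_mem hy hz
    | neg y _ hy => rw [mul_neg]; exact (P (m+1)).neg_mem hy
  have hPrho : ∀ (g : G) (m : ℕ) (y : R), y ∈ P m → ρ g y ∈ P m := by
    intro g m y hy
    induction hy using AddSubgroup.closure_induction with
    | mem z hz =>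
      obtain ⟨l, hl, hmem, rfl⟩ := hz
      refine AddSubgroup.subset_closure ⟨l.map (ρ g), by simp [hl], ?_, (map_list_prod _ _).symm⟩
      intro b hb
      obtain ⟨c, hc, rfl⟩ := List.mem_map.mp hb
      exact hIG g c (hmem c hc)
    | zero => rw [map_zero]; exact (P m).zero_mem
    | add y z _ _ hy hz => rw [map_add]; exact (P m).add_mem hy hz
    | neg y _ hy => rw [map_neg]; exact (P m).neg_mem hy
  have hPn : ∀ y, y ∈ P n → y = 0 := by
    intro y hy
    induction hy using AddSubgroup.closure_induction with
    | mem z hz => obtain ⟨l, hl, hmem, rfl⟩ := hz; exact hn l hl hmem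
    | zero => rfl
    | add y z _ _ hy hz => rw [hy, hz, add_zero]
    | neg y _ hy => rw [hy, neg_zero]
  have hprodP : ∀ l : List S, (∀ x ∈ l, ∀ g, B.repr x g ∈ I) →
      ∀ g, B.repr l.prod g ∈ P l.length := by
    intro l
    induction l with
    | nil =>
      intro _ g
      rw [List.prod_nil, ← hB1, B.repr_self, Finsupp.single_apply]
      split
      · exact AddSubgroup.subset_closure ⟨[], rfl, by simp, rfl⟩
      · exact (P 0).zero_mem
    | cons x t ih =>
      intro hmem g
      rw [List.prod_cons, key]
      refine AddSubgroup.sum_mem _ fun h _ => ?_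
      exact hPmul _ (hmem x List.mem_cons_self h) _ _
        (hPrho h _ _ (ih (fun y hy => hmem y (List.mem_cons_of_mem _ hy)) _))
  -- products of length n of K-elements vanish
  have hnilK : ∀ l : List S, l.length = n → (∀ x ∈ l, ∀ g, B.repr x g ∈ I) →
      l.prod = 0 := by
    intro l hl hmem
    have h0 : ∀ g, B.repr l.prod g = 0 := fun g => hPn _ (hl ▸ hprodP l hmem g)
    have h1 : B.repr l.prod = 0 := Finsupp.ext h0
    exact (LinearEquiv.map_eq_zero_iff B.repr).mp h1
  refine ⟨fun x hx s => hKJ _ (hKmul x s (hJK x hx)),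
    ⟨n, hn0, fun l hl hmem => hnilK l hl (fun x hx => hJK x (hmem x hx))⟩, ?_⟩
  -- semiprime consequence
  intro hsp
  have hvanish_ge : ∀ m : ℕ,
      (∀ l : List S, l.length = m → (∀ x ∈ l, ∀ g, B.repr x g ∈ I) → l.prod = 0) →
      ∀ l : List S, m ≤ l.length → (∀ x ∈ l, ∀ g, B.repr x g ∈ I) → l.prod = 0 := by
    intro m hm l hlen hmem
    rw [← List.take_append_drop m l, List.prod_append,
      hm (l.take m) (by rw [List.length_take]; omega)
        (fun x hx => hmem x (List.mem_of_mem_take hx)), zero_mul]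
  have step : ∀ m : ℕ, 0 < m →
      (∀ l : List S, l.length = m + 1 → (∀ x ∈ l, ∀ g, B.repr x g ∈ I) → l.prod = 0) →
      ∀ l : List S, l.length = m → (∀ x ∈ l, ∀ g, B.repr x g ∈ I) → l.prod = 0 := by
    intro m hm hstep l hlen hmem
    have hne : l ≠ [] := by
      intro h; rw [h] at hlen; simp at hlen; omega
    apply hsp
    intro s
    have hpe : l.dropLast.prod * l.getLast hne = l.prod := by
      conv_rhs => rw [← List.dropLast_append_getLast hne]
      rw [List.prod_append, List.prod_singleton]
    have hcalc : l.prod * s * l.prod = (l.dropLast ++ [l.getLast hne * s] ++ l).prod := by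
      rw [List.prod_append, List.prod_append, List.prod_singleton, ← hpe,
        mul_assoc l.dropLast.prod, mul_assoc l.dropLast.prod]
    rw [hcalc]
    apply hvanish_ge (m + 1) hstep
    · rw [List.length_append, List.length_append, List.length_singleton,
        List.length_dropLast, hlen]
      omega
    · intro x hx
      rcases List.mem_append.mp hx with hx | hx
      · rcases List.mem_append.mp hx with hx | hx
        · exact hmem x (List.dropLast_subset l hx)
        · rw [List.mem_singleton] at hx
          subst hx
          exact hKmul _ s (hmem _ (List.getLast_mem hne))
      · exact hmem x hx
  have hdown : ∀ d m : ℕ, 0 < m → m + d = n →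
      ∀ l : List S, l.length = m → (∀ x ∈ l, ∀ g, B.repr x g ∈ I) → l.prod = 0 := by
    intro d
    induction d with
    | zero =>
      intro m hm hmn
      have : m = n := by omega
      subst this
      exact hnilK
    | succ d ih =>
      intro m hm hmn
      exact step m hm (ih (m + 1) (by omega) (by omega))
  have h1 := hdown (n - 1) 1 one_pos (by omega)
  refine le_antisymm (fun a ha => ?_) bot_le
  rw [Ideal.mem_bot]
  have hKa : ∀ g, B.repr (ι a) g ∈ I := by
    intro g
    rw [hrepr_ι]
    split
    · exact ha
    · exact I.zero_mem
  have : ι a = 0 := by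
    have h2 := h1 [ι a] rfl (fun x hx => by
      rw [List.mem_singleton] at hx; subst hx; exact hKa)
    simpa using h2
  exact hι_inj a this
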